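/- Strictness for non-permutation strategies: suppose agent j reports truthfully (X̂_j = X_j), det(U_{X_i,X_j}) ≠ 0 (informative peer), X̂_i is conditionally independent of X_j given X_i, and the strategy transition matrix U_{X̂_i|X_i} is not a permutation matrix. Then DMI(X̂_i; X_j)^2 < DMI(X_i; X_j)^2. -/

import Mathlib

open MeasureTheory

/-- The joint distribution matrix of two random variables valued in `Fin C`. -/
noncomputable def jointMatrix {Ω : Type*} [MeasurableSpace Ω] (μ : Measure Ω) {C : ℕ}
    (X Y : Ω → Fin C) : Matrix (Fin C) (Fin C) ℝ :=
  Matrix.of fun x y => (μ {ω | X ω = x ∧ Y ω = y}).toReal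

/-- Determinant based mutual information: `DMI(X;Y) = |det U_{X,Y}|`. -/
noncomputable def DMI {Ω : Type*} [MeasurableSpace Ω] (μ : Measure Ω) {C : ℕ}
    (X Y : Ω → Fin C) : ℝ :=
  |(jointMatrix μ X Y).det|

/-- The transition matrix `U_{X'|X}`: entry `(x, x')` is `P[X' = x' | X = x]`. -/
noncomputable def transMatrix {Ω : Type*} [MeasurableSpace Ω] (μ : Measure Ω) {C : ℕ}
    (X X' : Ω → Fin C) : Matrix (Fin C) (Fin C) ℝ :=
  Matrix.of fun x x' => (μ {ω | X' ω = x' ∧ X ω = x}).toReal / (μ {ω | X ω = x}).toReal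

/-- A permutation matrix. -/
def IsPermMatrix {C : ℕ} (T : Matrix (Fin C) (Fin C) ℝ) : Prop :=
  ∃ π : Equiv.Perm (Fin C), ∀ i j, T i j = if π i = j then 1 else 0

lemma abs_det_lt_one_of_stochastic {C : ℕ} (T : Matrix (Fin C) (Fin C) ℝ)
    (h0 : ∀ i j, 0 ≤ T i j) (h1 : ∀ i, ∑ j, T i j = 1)
    (hnp : ¬ IsPermMatrix T) : |T.det| < 1 := by
  rcases Nat.eq_zero_or_pos C with hC | hC
  · subst hC; exact absurd ⟨Equiv.refl _, fun i => i.elim0⟩ hnp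
  by_cases hb : ∀ i j, T i j = 0 ∨ T i j = 1
  · -- 0/1 case: T is given by a non-injective function, two rows coincide
    have hw : ∀ i, ∃ j, T i j = 1 := by
      intro i; by_contra hno; push_neg at hno
      have h2 : ∑ j, T i j = 0 :=
        Finset.sum_eq_zero fun j _ => (hb i j).resolve_right (hno j)
      rw [h1 i] at h2; norm_num at h2
    choose w hwT using hw
    have hrow : ∀ i j, T i j = if w i = j then 1 else 0 := by
      intro i j
      by_cases hji : w i = j
      · subst hji; simp [hwT i]
      · simp only [hji, if_false]
        rcases hb i j with h | h
        · exact h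
        · exfalso
          have hsub : ({j, w i} : Finset (Fin C)) ⊆ Finset.univ := Finset.subset_univ _
          have h2 : (2:ℝ) ≤ ∑ k, T i k := by
            have := Finset.sum_le_sum_of_subset_of_nonneg hsub
              (fun k _ _ => h0 i k)
            calc (2:ℝ) = ∑ k ∈ ({j, w i} : Finset (Fin C)), T i k := by
                  rw [Finset.sum_pair (fun hh => hji hh.symm)]
                  rw [h, hwT i]; norm_num
              _ ≤ ∑ k, T i k := this
          rw [h1 i] at h2; norm_num at h2
    have hwinj : ¬ Function.Injective w := by
      intro hinj
      exact hnp ⟨Equiv.ofBijective w (Finite.injective_iff_bijective.mp hinj),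
        fun i j => by rw [hrow i j]; rfl⟩
    rw [Function.not_injective_iff] at hwinj
    obtain ⟨a, b, hab, hne⟩ := hwinj
    have : T.det = 0 := by
      apply Matrix.det_zero_of_row_eq hne
      funext j; rw [hrow a j, hrow b j, hab]
    rw [this]; norm_num
  · -- strict case
    push_neg at hb
    obtain ⟨r, c, hc0, hc1⟩ := hb
    have hrc : 0 < T r c := lt_of_le_of_ne (h0 r c) (Ne.symm hc0)
    -- second positive entry in row r
    have hex : ∃ c2, c2 ≠ c ∧ 0 < T r c2 := by
      by_contra hno; push_neg at hno
      have : ∑ j, T r j = T r c := Finset.sum_eq_single c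
        (fun j _ hj => le_antisymm (hno j hj) (h0 r j)) (fun h => absurd (Finset.mem_univ c) h)
      rw [h1 r] at this; exact hc1 this.symm
    obtain ⟨c2, hc2ne, hc2pos⟩ := hex
    have hwpos : ∀ i, ∃ j, 0 < T i j := by
      intro i; by_contra hno; push_neg at hno
      have : ∑ j, T i j = 0 :=
        Finset.sum_eq_zero fun j _ => le_antisymm (hno j) (h0 i j)
      rw [h1 i] at this; norm_num at this
    choose w hw using hwpos
    set f := Function.update w r c with hf
    set g := Function.update w r c2 with hg
    have hfpos : ∀ i, 0 < T i (f i) := by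
      intro i; by_cases h : i = r
      · subst h; simpa [hf, Function.update_self] using hrc
      · simpa [hf, Function.update_of_ne h] using hw i
    have hgpos : ∀ i, 0 < T i (g i) := by
      intro i; by_cases h : i = r
      · subst h; simpa [hg, Function.update_self] using hc2pos
      · simpa [hg, Function.update_of_ne h] using hw i
    have hkey : ¬ Function.Injective f ∨ ¬ Function.Injective g := by
      by_contra h; push_neg at h
      obtain ⟨hfi, hgi⟩ := h
      have hfb : Function.Bijective f := Finite.injective_iff_bijective.mp hfi
      obtain ⟨a, ha⟩ := hfb.surjective c2
      have har : a ≠ r := by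
        intro h; subst h
        rw [hf, Function.update_self] at ha
        exact hc2ne ha.symm
      have : g a = g r := by
        rw [hg, Function.update_of_ne har, Function.update_self]
        rw [hf, Function.update_of_ne har] at ha
        exact ha
      exact har (hgi this)
    obtain ⟨n, hninj, hnpos⟩ : ∃ n : Fin C → Fin C,
        ¬ Function.Injective n ∧ ∀ i, 0 < T i (n i) := by
      rcases hkey with h | h
      · exact ⟨f, h, hfpos⟩
      · exact ⟨g, h, hgpos⟩
    -- sum over all functions equals 1
    have sum_all : ∑ fn : Fin C → Fin C, ∏ i, T i (fn i) = 1 := by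
      have := Finset.prod_univ_sum (fun _ : Fin C => (Finset.univ : Finset (Fin C)))
        (fun i j => T i j)
      rw [Fintype.piFinset_univ] at this
      rw [← this]
      simp [h1]
    -- sum over permutations is strictly less than 1
    have hperm : ∑ σ : Equiv.Perm (Fin C), ∏ i, T i (σ i) < 1 := by
      have himg : ∑ σ : Equiv.Perm (Fin C), ∏ i, T i (σ i) =
          ∑ fn ∈ Finset.univ.image (fun σ : Equiv.Perm (Fin C) => ⇑σ), ∏ i, T i (fn i) := by
        rw [Finset.sum_image (fun a _ b _ hab => Equiv.coe_fn_injective hab)]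
      have hsubset : Finset.univ.image (fun σ : Equiv.Perm (Fin C) => ⇑σ) ⊆
          Finset.univ.erase n := by
        intro fn hfn
        simp only [Finset.mem_image, Finset.mem_univ, true_and] at hfn
        obtain ⟨σ, hσ⟩ := hfn
        refine Finset.mem_erase.mpr ⟨?_, Finset.mem_univ _⟩
        intro h; exact hninj (by rw [← h, ← hσ]; exact σ.injective)
      calc ∑ σ : Equiv.Perm (Fin C), ∏ i, T i (σ i)
          ≤ ∑ fn ∈ Finset.univ.erase n, ∏ i, T i (fn i) := by
            rw [himg]
            exact Finset.sum_le_sum_of_subset_of_nonneg hsubset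
              (fun fn _ _ => Finset.prod_nonneg fun i _ => h0 i (fn i))
        _ = 1 - ∏ i, T i (n i) := by
            have := Finset.add_sum_erase Finset.univ (fun fn : Fin C → Fin C => ∏ i, T i (fn i))
              (Finset.mem_univ n)
            rw [sum_all] at this
            linarith
        _ < 1 := by
            have : 0 < ∏ i, T i (n i) := Finset.prod_pos fun i _ => hnpos i
            linarith
    -- |det| ≤ perm sum
    have hdet : |T.det| ≤ ∑ σ : Equiv.Perm (Fin C), ∏ i, T i (σ i) := by
      rw [← Matrix.det_transpose, Matrix.det_apply']
      refine le_trans (Finset.abs_sum_le_sum_abs _ _) ?_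
      apply Finset.sum_le_sum
      intro σ _
      have heq : ∀ i, T.transpose (σ i) i = T i (σ i) := fun i => rfl
      simp only [heq]
      rw [abs_mul]
      rcases Int.units_eq_one_or (Equiv.Perm.sign σ) with h | h <;>
        simp [h, abs_of_nonneg (Finset.prod_nonneg fun i _ => h0 i (σ i))]
    linarith

lemma meas_fiber_sum {Ω : Type*} [MeasurableSpace Ω] (μ : Measure Ω) {C : ℕ}
    {g : Ω → Fin C} (hg : Measurable g) {s : Set Ω} (hs : MeasurableSet s) :
    ∑ y : Fin C, μ (s ∩ g ⁻¹' {y}) = μ s := by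
  rw [← tsum_fintype (L := SummationFilter.unconditional _), ← measure_iUnion]
  · congr 1; ext ω; simp
  · intro a b hab
    simp only [Function.onFun, Set.disjoint_left]
    rintro ω ⟨-, ha⟩ ⟨-, hb⟩
    simp only [Set.mem_preimage, Set.mem_singleton_iff] at ha hb
    exact hab (by rw [← ha, hb])
  · exact fun y => hs.inter (hg (measurableSet_singleton y))

/-- strictness for non-permutation strategies: if agent `j` reports
truthfully, `det U_{Xᵢ,Xⱼ} ≠ 0` (informative peer), `X̂ᵢ` is conditionally independent of
`Xⱼ` given `Xᵢ`, and the strategy transition matrix `U_{X̂ᵢ|Xᵢ}` is not a permutation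
matrix, then `DMI(X̂ᵢ; Xⱼ)² < DMI(Xᵢ; Xⱼ)²`. -/
theorem strict_loss_of_non_permutation_strategy {Ω : Type*} [MeasurableSpace Ω]
    (μ : Measure Ω) [IsProbabilityMeasure μ] {C : ℕ}
    (Xi Xj Xihat : Ω → Fin C)
    (hXi : Measurable Xi) (hXj : Measurable Xj) (hXihat : Measurable Xihat)
    (hci : ∀ x x' y,
      μ {ω | Xi ω = x} * μ {ω | Xihat ω = x' ∧ Xj ω = y ∧ Xi ω = x} =
        μ {ω | Xihat ω = x' ∧ Xi ω = x} * μ {ω | Xj ω = y ∧ Xi ω = x})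
    (hdet : (jointMatrix μ Xi Xj).det ≠ 0)
    (hnp : ¬ IsPermMatrix (transMatrix μ Xi Xihat)) :
    DMI μ Xihat Xj ^ 2 < DMI μ Xi Xj ^ 2 := by
  set J := jointMatrix μ Xi Xj with hJ
  set T := transMatrix μ Xi Xihat with hT
  set J' := jointMatrix μ Xihat Xj with hJ'
  -- Step A: joint row sums
  have stepA : ∀ x : Fin C, ∑ y : Fin C, μ {ω | Xi ω = x ∧ Xj ω = y} = μ {ω | Xi ω = x} := by
    intro x
    have h1 : ∀ y : Fin C, {ω | Xi ω = x ∧ Xj ω = y} = Xi ⁻¹' {x} ∩ Xj ⁻¹' {y} :=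
      fun y => rfl
    have h2 : {ω | Xi ω = x} = Xi ⁻¹' {x} := rfl
    simp_rw [h1, h2]
    exact meas_fiber_sum μ hXj (hXi (measurableSet_singleton x))
  -- Step B
  have stepB : ∀ x : Fin C,
      ∑ x' : Fin C, μ {ω | Xihat ω = x' ∧ Xi ω = x} = μ {ω | Xi ω = x} := by
    intro x
    have h1 : ∀ x' : Fin C, {ω | Xihat ω = x' ∧ Xi ω = x} = Xi ⁻¹' {x} ∩ Xihat ⁻¹' {x'} :=
      fun x' => Set.ext fun ω => and_comm
    have h2 : {ω | Xi ω = x} = Xi ⁻¹' {x} := rfl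
    simp_rw [h1, h2]
    exact meas_fiber_sum μ hXihat (hXi (measurableSet_singleton x))
  -- Step C
  have stepC : ∀ (x' y : Fin C),
      ∑ x : Fin C, μ {ω | Xihat ω = x' ∧ Xj ω = y ∧ Xi ω = x} =
        μ {ω | Xihat ω = x' ∧ Xj ω = y} := by
    intro x' y
    have h1 : ∀ x : Fin C, {ω | Xihat ω = x' ∧ Xj ω = y ∧ Xi ω = x} =
        (Xihat ⁻¹' {x'} ∩ Xj ⁻¹' {y}) ∩ Xi ⁻¹' {x} :=
      fun x => Set.ext fun ω => and_assoc.symm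
    have h2 : {ω | Xihat ω = x' ∧ Xj ω = y} = Xihat ⁻¹' {x'} ∩ Xj ⁻¹' {y} := rfl
    simp_rw [h1, h2]
    exact meas_fiber_sum μ hXi
      ((hXihat (measurableSet_singleton x')).inter (hXj (measurableSet_singleton y)))
  -- positivity of marginals
  have stepP : ∀ x : Fin C, 0 < (μ {ω | Xi ω = x}).toReal := by
    intro x
    rcases eq_or_lt_of_le (ENNReal.toReal_nonneg (a := μ {ω | Xi ω = x})) with h | h
    · exfalso
      have hz : μ {ω | Xi ω = x} = 0 := by
        have h0 : (μ {ω | Xi ω = x}).toReal = 0 := h.symm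
        rcases (ENNReal.toReal_eq_zero_iff _).mp h0 with h' | h'
        · exact h'
        · exact absurd h' (measure_ne_top μ _)
      apply hdet
      apply Matrix.det_eq_zero_of_row_eq_zero x
      intro y
      have hle : μ {ω | Xi ω = x ∧ Xj ω = y} ≤ μ {ω | Xi ω = x} :=
        measure_mono fun ω hω => hω.1
      rw [hz] at hle
      simp only [hJ, jointMatrix, Matrix.of_apply]
      rw [le_zero_iff.mp hle]; simp
    · exact h
  -- T nonneg
  have hT0 : ∀ x x', 0 ≤ T x x' := fun x x' =>
    div_nonneg ENNReal.toReal_nonneg ENNReal.toReal_nonneg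
  -- T row sums
  have hT1 : ∀ x, ∑ x', T x x' = 1 := by
    intro x
    have hsum : ∑ x' : Fin C, (μ {ω | Xihat ω = x' ∧ Xi ω = x}).toReal =
        (μ {ω | Xi ω = x}).toReal := by
      rw [← ENNReal.toReal_sum (fun a _ => measure_ne_top μ _), stepB x]
    simp only [hT, transMatrix, Matrix.of_apply]
    rw [← Finset.sum_div, hsum, div_self (ne_of_gt (stepP x))]
  -- factorization of entries
  have hfac : ∀ x' y, J' x' y = ∑ x, T x x' * J x y := by
    intro x' y
    have hJ'e : J' x' y = ∑ x : Fin C, (μ {ω | Xihat ω = x' ∧ Xj ω = y ∧ Xi ω = x}).toReal := by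
      simp only [hJ', jointMatrix, Matrix.of_apply]
      rw [← ENNReal.toReal_sum (fun a _ => measure_ne_top μ _), stepC x' y]
    rw [hJ'e]
    apply Finset.sum_congr rfl
    intro x _
    have hci' := congrArg ENNReal.toReal (hci x x' y)
    rw [ENNReal.toReal_mul, ENNReal.toReal_mul] at hci'
    have hbJ : (μ {ω | Xj ω = y ∧ Xi ω = x}).toReal = J x y := by
      simp only [hJ, jointMatrix, Matrix.of_apply]
      congr 2
      ext ω; exact and_comm
    rw [hbJ] at hci'
    simp only [hT, transMatrix, Matrix.of_apply]
    rw [div_mul_eq_mul_div, eq_div_iff (ne_of_gt (stepP x))]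
    linear_combination hci'
  -- matrix identity
  have hmat : J' = T.transpose * J := by
    ext x' y
    rw [Matrix.mul_apply]
    simp only [Matrix.transpose_apply]
    exact hfac x' y
  have hdet' : J'.det = T.det * J.det := by
    rw [hmat, Matrix.det_mul, Matrix.det_transpose]
  have hTlt : |T.det| < 1 := abs_det_lt_one_of_stochastic T hT0 hT1 hnp
  have hJpos : 0 < |J.det| := abs_pos.mpr hdet
  calc DMI μ Xihat Xj ^ 2 = |T.det| ^ 2 * |J.det| ^ 2 := by
        rw [DMI, ← hJ', hdet', abs_mul, mul_pow]
      _ < 1 * |J.det| ^ 2 := by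
        apply mul_lt_mul_of_pos_right _ (pow_pos hJpos 2)
        calc |T.det| ^ 2 ≤ |T.det| := by nlinarith [abs_nonneg T.det]
          _ < 1 := hTlt
      _ = DMI μ Xi Xj ^ 2 := by rw [one_mul, DMI, ← hJ]
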